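/- Let q ∈ (0,1) and A a real 2×2 matrix with trace τ and determinant δ. Both (complex) eigenvalues λ of A satisfy |arg(λ)| > qπ/2 if and only if either (i) τ < 0 and δ > 0, or (ii) τ ≥ 0 and δ > (τ²/4)·sec²(qπ/2). -/

import Mathlib

open Real Complex Polynomial
set_option maxHeartbeats 1000000

lemma arg_iff' (θ : ℝ) (hθ0 : 0 ≤ θ) (hθπ : θ ≤ π) (z : ℂ) (hz : z ≠ 0) :
    |z.arg| > θ ↔ z.re < ‖z‖ * Real.cos θ := by
  have habs : 0 < ‖z‖ := norm_pos_iff.mpr hz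
  have h1 : Real.cos |z.arg| = z.re / ‖z‖ := by
    rw [Real.cos_abs, Complex.cos_arg hz]
  have hmem : |z.arg| ∈ Set.Icc 0 π := ⟨abs_nonneg _, Complex.abs_arg_le_pi z⟩
  have hmem2 : θ ∈ Set.Icc 0 π := ⟨hθ0, hθπ⟩
  rw [gt_iff_lt, ← Real.strictAntiOn_cos.lt_iff_gt hmem hmem2, h1, div_lt_iff₀ habs, mul_comm]

lemma root_iff' (A : Matrix (Fin 2) (Fin 2) ℝ) (τ δ : ℝ) (hτ : τ = A.trace) (hδ : δ = A.det)
    (lam : ℂ) :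
    (A.map (Complex.ofReal)).charpoly.IsRoot lam ↔ lam ^ 2 - τ * lam + δ = 0 := by
  rw [Polynomial.IsRoot, Matrix.charpoly, Matrix.det_fin_two]
  simp only [Matrix.charmatrix_apply_eq, Matrix.charmatrix_apply_ne _ _ _ (by decide : (0:Fin 2) ≠ 1),
    Matrix.charmatrix_apply_ne _ _ _ (by decide : (1:Fin 2) ≠ 0), Matrix.map_apply,
    hτ, hδ, Matrix.trace_fin_two, Matrix.det_fin_two]
  simp only [eval_mul, eval_sub, eval_neg, eval_X, eval_C]
  push_cast
  constructor <;> intro h <;> linear_combination h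

theorem matrix_eigen_arg (q : ℝ) (hq0 : 0 < q) (hq1 : q < 1)
    (A : Matrix (Fin 2) (Fin 2) ℝ) (τ δ : ℝ)
    (hτ : τ = A.trace) (hδ : δ = A.det) :
    (∀ lam : ℂ, (A.map (Complex.ofReal)).charpoly.IsRoot lam → |lam.arg| > q * π / 2) ↔
      ((τ < 0 ∧ δ > 0) ∨ (τ ≥ 0 ∧ δ > τ ^ 2 / 4 * (1 / Real.cos (q * π / 2)) ^ 2)) := by
  have hπ := Real.pi_pos
  have hθ0 : 0 < q * π / 2 := by positivity
  have hθlt : q * π / 2 < π / 2 := by nlinarith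
  set c := Real.cos (q * π / 2) with hcdef
  have hc : 0 < c := Real.cos_pos_of_mem_Ioo ⟨by linarith, hθlt⟩
  have hc1 : c ≤ 1 := Real.cos_le_one _
  have hroot := root_iff' A τ δ hτ hδ
  constructor
  · intro h
    by_contra hR
    push_neg at hR
    obtain ⟨hR1, hR2⟩ := hR
    have key : ¬ (0 ≤ τ^2 - 4*δ ∧ 0 ≤ τ + Real.sqrt (τ^2 - 4*δ)) := by
      rintro ⟨hd, hx⟩
      set s := Real.sqrt (τ^2-4*δ) with hs
      have hs2 : s^2 = τ^2-4*δ := Real.sq_sqrt hd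
      have hxr : ((τ+s)/2)^2 - τ*((τ+s)/2) + δ = 0 := by nlinarith
      have hr : ((((τ+s)/2 : ℝ)) : ℂ) ^2 - τ * ((((τ+s)/2 : ℝ)):ℂ) + δ = 0 := by
        exact_mod_cast congrArg (Complex.ofReal) hxr
      have harg := h _ ((hroot _).mpr hr)
      rw [Complex.arg_ofReal_of_nonneg (by linarith : (0:ℝ) ≤ (τ+s)/2)] at harg
      simp at harg
      linarith
    rcases le_or_gt δ 0 with h0 | h0
    · apply key
      constructor
      · nlinarith [sq_nonneg τ]
      · have habs : |τ| ≤ Real.sqrt (τ^2-4*δ) := by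
          rw [← Real.sqrt_sq_eq_abs]
          exact Real.sqrt_le_sqrt (by nlinarith)
        linarith [neg_abs_le τ]
    · have hτ0 : 0 ≤ τ := by
        by_contra hτn
        push_neg at hτn
        linarith [hR1 hτn]
      have hδle := hR2 hτ0
      rcases le_or_gt δ (τ^2/4) with h1 | h1
      · exact key ⟨by linarith, add_nonneg hτ0 (Real.sqrt_nonneg _)⟩
      · set y := Real.sqrt (δ - τ^2/4) with hy
        have hy2 : y^2 = δ - τ^2/4 := Real.sq_sqrt (by linarith)
        have hy0 : 0 < y := Real.sqrt_pos.mpr (by linarith)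
        set z : ℂ := ⟨τ/2, y⟩ with hz
        have hzr : z^2 - τ*z + δ = 0 := by
          apply Complex.ext <;>
            simp [hz, pow_two, Complex.mul_re, Complex.mul_im] <;> nlinarith
        have hzne : z ≠ 0 := by
          intro h0
          have : z.im = 0 := by rw [h0]; rfl
          rw [hz] at this
          simp at this
          linarith
        have harg := h z ((hroot z).mpr hzr)
        rw [arg_iff' _ hθ0.le (by linarith) z hzne] at harg
        have habs : ‖z‖ = Real.sqrt δ := by
          rw [Complex.norm_def, Complex.normSq_apply]
          congr 1
          rw [hz]
          simp
          nlinarith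
        rw [habs] at harg
        have hre : z.re = τ/2 := rfl
        rw [hre] at harg
        have hs0 : 0 ≤ Real.sqrt δ := Real.sqrt_nonneg _
        have hs2 : (Real.sqrt δ)^2 = δ := Real.sq_sqrt (le_of_lt h0)
        have hcc : (1/c)^2 * c^2 = 1 := by field_simp
        have h2 : δ * c^2 ≤ τ^2/4 := by nlinarith [mul_pos hc hc, hcc, hδle]
        have h3 : (Real.sqrt δ * c)^2 ≤ (τ/2)^2 := by nlinarith
        nlinarith [harg, h3, hτ0]
  · rintro hR lam hl
    rw [hroot] at hl
    have hδpos : 0 < δ := by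
      rcases hR with ⟨_, h⟩ | ⟨_, h⟩
      · exact h
      · nlinarith [sq_nonneg τ, sq_nonneg (1/c)]
    have hne : lam ≠ 0 := by
      intro h0
      rw [h0] at hl
      simp at hl
      have : δ = 0 := by exact_mod_cast hl
      linarith
    rw [Complex.ext_iff] at hl
    obtain ⟨hre, him⟩ := hl
    simp [pow_two, Complex.mul_re, Complex.mul_im] at hre him
    rw [arg_iff' _ hθ0.le (by linarith) lam hne]
    have hfac : lam.im * (2*lam.re - τ) = 0 := by linarith [him]
    rcases mul_eq_zero.mp hfac with hy | hx
    · -- real root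
      have habs : ‖lam‖ = |lam.re| := by
        rw [Complex.norm_def, Complex.normSq_apply, hy]
        simp [Real.sqrt_mul_self_eq_abs]
      rcases lt_or_ge lam.re 0 with hneg | hpos
      · have : 0 < |lam.re| * c := mul_pos (abs_pos.mpr (ne_of_lt hneg)) hc
        rw [habs]; linarith
      · exfalso
        rw [hy] at hre
        rcases hR with ⟨ht, hd⟩ | ⟨ht, hd⟩
        · nlinarith
        · have h1c : 1 ≤ 1/c := by rw [le_div_iff₀ hc]; linarith
          have h1c2 : 1 ≤ (1/c)^2 := by nlinarith [h1c]
          have hd4 : δ > τ^2/4 := by nlinarith [sq_nonneg τ, h1c2]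
          nlinarith [sq_nonneg (lam.re - τ/2)]
    · have hx' : lam.re = τ/2 := by linarith
      have hy2 : lam.im^2 = δ - τ^2/4 := by nlinarith
      have habs : ‖lam‖ = Real.sqrt δ := by
        rw [Complex.norm_def, Complex.normSq_apply]
        congr 1
        nlinarith
      rw [habs, hx']
      have hs0 : 0 ≤ Real.sqrt δ := Real.sqrt_nonneg _
      have hs2 : (Real.sqrt δ)^2 = δ := Real.sq_sqrt (le_of_lt hδpos)
      rcases hR with ⟨ht, hd⟩ | ⟨ht, hd⟩
      · have : 0 < Real.sqrt δ * c := mul_pos (Real.sqrt_pos.mpr hδpos) hc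
        linarith
      · have hcc : (1/c)^2 * c^2 = 1 := by field_simp
        have h2 : τ^2/4 < δ * c^2 := by nlinarith [mul_pos hc hc, hcc, hd]
        have hsc : 0 ≤ Real.sqrt δ * c := mul_nonneg hs0 hc.le
        by_contra hcon
        push_neg at hcon
        nlinarith [h2, hs2, hcon, hsc]
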